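/- arXiv:1207.5879 — 2 statements merged into one kernel-verified Lean document; each statement's English description precedes it below -/
import Mathlib

section
/- With samples bounded in [0,1], the blinkered value of information Λ_i^b of taking N additional samples of a non-leading arm i (i ≠ α) satisfies Λ_i^b ≤ (N(1 − x̄_α^{n_α})/(N + n_i)) · Pr(x̄_i^{n_i+N} ≥ x̄_α^{n_α}) ≤ (N(1 − x̄_α^{n_α})/n_i) · Pr(x̄_i^{n_i+N} ≥ x̄_α^{n_α}). -/
open MeasureTheory

/-- blinkered VOI bound for a non-leading arm `i`.  Here `b = x̄_i^{n_i}`,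
`a = x̄_α^{n_α}` is the leading sample mean, `S ω ∈ [0,1]` is the mean of the `N` new
samples, and `Y ω = x̄_i^{n_i+N}` is the updated sample mean.  The blinkered VOI
`Λ_i^b = E[max (Y - a) 0]`. -/
theorem blinkered_voi_bound_nonleading
    {Ω : Type*} [MeasurableSpace Ω] (ℙ : Measure Ω) [IsProbabilityMeasure ℙ]
    (n N a b : ℝ) (hn : 0 < n) (hN : 0 < N)
    (ha1 : a ≤ 1) (hba : b ≤ a)
    (S : Ω → ℝ) (hmeas : Measurable S) (hS : ∀ ω, 0 ≤ S ω ∧ S ω ≤ 1)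
    (Y : Ω → ℝ) (hY : ∀ ω, Y ω = (n * b + N * S ω) / (n + N)) :
    (∫ ω, max (Y ω - a) 0 ∂ℙ) ≤
      N * (1 - a) / (N + n) * (ℙ {ω | a ≤ Y ω}).toReal ∧
    N * (1 - a) / (N + n) * (ℙ {ω | a ≤ Y ω}).toReal ≤
      N * (1 - a) / n * (ℙ {ω | a ≤ Y ω}).toReal := by
  have hnN : (0:ℝ) < n + N := by linarith
  have hc0 : 0 ≤ N * (1 - a) / (N + n) := by
    apply div_nonneg (by nlinarith) (by linarith)
  have hYmeas : Measurable Y := by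
    have : Y = fun ω => (n * b + N * S ω) / (n + N) := funext hY
    rw [this]
    exact ((measurable_const.add (hmeas.const_mul N)).div_const _)
  have hEmeas : MeasurableSet {ω | a ≤ Y ω} := measurableSet_le measurable_const hYmeas
  -- pointwise bound
  have hpt : ∀ ω, max (Y ω - a) 0 ≤
      Set.indicator {ω | a ≤ Y ω} (fun _ => N * (1 - a) / (N + n)) ω := by
    intro ω
    rcases le_or_gt a (Y ω) with h | h
    · rw [Set.indicator_of_mem (show ω ∈ {ω | a ≤ Y ω} from h)]
      rw [max_le_iff]
      refine ⟨?_, hc0⟩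
      have hS1 := (hS ω).2
      rw [hY ω]
      rw [div_sub' (ne_of_gt hnN), div_le_div_iff₀ hnN (by linarith)]
      have h1 : n * b ≤ n * a := mul_le_mul_of_nonneg_left hba hn.le
      have h2 : N * S ω ≤ N * 1 := mul_le_mul_of_nonneg_left hS1 hN.le
      nlinarith [mul_le_mul_of_nonneg_right
        (show n * b + N * S ω - (n + N) * a ≤ N * (1 - a) by nlinarith) hnN.le]
    · rw [Set.indicator_of_notMem (by simpa using not_le.2 h)]
      simp [max_le_iff, sub_nonpos, le_of_lt h]
  have hint : Integrable (Set.indicator {ω | a ≤ Y ω}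
      (fun _ => N * (1 - a) / (N + n))) ℙ :=
    (integrable_const _).indicator hEmeas
  constructor
  · calc (∫ ω, max (Y ω - a) 0 ∂ℙ)
        ≤ ∫ ω, Set.indicator {ω | a ≤ Y ω} (fun _ => N * (1 - a) / (N + n)) ω ∂ℙ := by
          apply integral_mono_of_nonneg (Filter.Eventually.of_forall fun ω => le_max_right _ _)
            hint (Filter.Eventually.of_forall hpt)
      _ = N * (1 - a) / (N + n) * (ℙ {ω | a ≤ Y ω}).toReal := by
          rw [integral_indicator_const _ hEmeas]; ring_nf; rfl
  · apply mul_le_mul_of_nonneg_right _ ENNReal.toReal_nonneg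
    apply div_le_div_of_nonneg_left (by nlinarith) hn (by linarith)
end

section
/- With samples bounded in [0,1], the blinkered value of information Λ_α^b of taking N additional samples of the leading arm α satisfies Λ_α^b ≤ (N·x̄_β^{n_β}/(N + n_α)) · Pr(x̄_α^{n_α+N} ≤ x̄_β^{n_β}) ≤ (N·x̄_β^{n_β}/n_α) · Pr(x̄_α^{n_α+N} ≤ x̄_β^{n_β}). -/
open MeasureTheory

/-- blinkered VOI bound for the leading arm `α`.  Here `a = x̄_α^{n_α}` is the
leading sample mean, `xβ = x̄_β^{n_β} ≤ a` the second best, `S ω ∈ [0,1]` the mean of the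
`N` new samples of arm `α`, and `Y ω = x̄_α^{n_α+N}`.  The blinkered VOI
`Λ_α^b = E[max (xβ - Y) 0]`. -/
theorem blinkered_voi_bound_leading
    {Ω : Type*} [MeasurableSpace Ω] (ℙ : Measure Ω) [IsProbabilityMeasure ℙ]
    (n N a xβ : ℝ) (hn : 0 < n) (hN : 0 < N)
    (h0 : 0 ≤ xβ) (hβα : xβ ≤ a)
    (S : Ω → ℝ) (hmeas : Measurable S) (hS : ∀ ω, 0 ≤ S ω ∧ S ω ≤ 1)
    (Y : Ω → ℝ) (hY : ∀ ω, Y ω = (n * a + N * S ω) / (n + N)) :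
    (∫ ω, max (xβ - Y ω) 0 ∂ℙ) ≤
      N * xβ / (N + n) * (ℙ {ω | Y ω ≤ xβ}).toReal ∧
    N * xβ / (N + n) * (ℙ {ω | Y ω ≤ xβ}).toReal ≤
      N * xβ / n * (ℙ {ω | Y ω ≤ xβ}).toReal := by
  have hnN : (0:ℝ) < n + N := by linarith
  have hNn : (0:ℝ) < N + n := by linarith
  have hYm : Measurable Y := by
    have hYe : Y = fun ω => (n * a + N * S ω) / (n + N) := funext hY
    rw [hYe]
    exact (measurable_const.add (hmeas.const_mul N)).div_const _
  set s : Set Ω := {ω | Y ω ≤ xβ} with hs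
  have hsm : MeasurableSet s := hYm measurableSet_Iic
  set c : ℝ := N * xβ / (N + n) with hc
  have hc0 : 0 ≤ c := div_nonneg (by positivity) hNn.le
  have hbound : ∀ ω, max (xβ - Y ω) 0 ≤ s.indicator (fun _ => c) ω := by
    intro ω
    by_cases hω : Y ω ≤ xβ
    · have hmem : ω ∈ s := hω
      rw [Set.indicator_of_mem hmem]
      refine max_le ?_ hc0
      have h1 : n * xβ ≤ n * a := mul_le_mul_of_nonneg_left hβα hn.le
      have h2 : 0 ≤ N * S ω := mul_nonneg hN.le (hS ω).1
      have key : xβ ≤ (n * a + N * S ω) / (n + N) + N * xβ / (N + n) := by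
        rw [div_add_div _ _ hnN.ne' hNn.ne', le_div_iff₀ (by positivity)]
        nlinarith
      rw [hY ω]
      linarith
    · have hmem : ω ∉ s := hω
      rw [Set.indicator_of_notMem hmem]
      have : xβ - Y ω ≤ 0 := by linarith [not_le.mp hω]
      simp [max_le_iff, this]
  have hint : Integrable (s.indicator fun _ => c) ℙ :=
    (integrable_const c).indicator hsm
  have hmono : (∫ ω, max (xβ - Y ω) 0 ∂ℙ) ≤ ∫ ω, s.indicator (fun _ => c) ω ∂ℙ :=
    integral_mono_of_nonneg (Filter.Eventually.of_forall fun ω => le_max_right _ _)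
      hint (Filter.Eventually.of_forall hbound)
  have hieq : (∫ ω, s.indicator (fun _ => c) ω ∂ℙ) = c * (ℙ s).toReal := by
    rw [integral_indicator_const _ hsm, smul_eq_mul, mul_comm, measureReal_def]
  constructor
  · calc (∫ ω, max (xβ - Y ω) 0 ∂ℙ) ≤ _ := hmono
      _ = c * (ℙ s).toReal := hieq
  · apply mul_le_mul_of_nonneg_right _ ENNReal.toReal_nonneg
    exact div_le_div_of_nonneg_left (by positivity) hn (by linarith)
end
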